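/- Let D ⊆ 2^V be a distributive lattice with ∅, V ∈ D and H : D → ℝ submodular with H(∅) = 0. For α ∈ ℝ, let A^α be the maximal minimizer of S ↦ H(S) + α|S| over D. Define z ∈ ℝ_+^V by z(v) = max{ sup{ α : v ∈ A^α }, 0 }. Then z minimizes h(x) + (1/2)‖x‖² over x ∈ ℝ_+^V, where h is the Lovász extension of H. -/

import Mathlib

open scoped BigOperators
open Finset

open scoped BigOperators

lemma eps_le_aux {a c δ : ℝ} (hδ : 0 < δ) (h : ∀ ε : ℝ, 0 < ε → ε < δ → a ≤ ε * c) : a ≤ 0 := by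
  rcases le_or_gt c 0 with hc | hc
  · have := h (δ/2) (by linarith) (by linarith)
    nlinarith
  · by_contra hpos
    push_neg at hpos
    have hε : (0:ℝ) < min (δ/2) (a/(2*c)) := by
      apply lt_min (by linarith) (by positivity)
    have h2 := h _ hε (lt_of_le_of_lt (min_le_left _ _) (by linarith))
    have h3 : min (δ/2) (a/(2*c)) * c ≤ (a/(2*c)) * c :=
      mul_le_mul_of_nonneg_right (min_le_right _ _) hc.le
    have h4 : (a/(2*c)) * c = a/2 := by field_simp
    linarith

lemma nonneg_base {V : Type*} [Fintype V] [DecidableEq V] (n : ℕ) :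
    ∀ (U : Finset V) (D₀ : Set (Finset V)) (H₀ : Finset V → ℝ),
    U.card ≤ n →
    ∅ ∈ D₀ → U ∈ D₀ → (∀ T ∈ D₀, T ⊆ U) →
    (∀ T T', T ∈ D₀ → T' ∈ D₀ → T ∪ T' ∈ D₀) →
    (∀ T T', T ∈ D₀ → T' ∈ D₀ → T ∩ T' ∈ D₀) →
    H₀ ∅ = 0 → (∀ T ∈ D₀, 0 ≤ H₀ T) →
    (∀ T T', T ∈ D₀ → T' ∈ D₀ → H₀ (T ∪ T') + H₀ (T ∩ T') ≤ H₀ T + H₀ T') →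
    ∃ w : V → ℝ, (∀ v, v ∉ U → w v = 0) ∧ (∀ v, 0 ≤ w v) ∧
      (∀ T ∈ D₀, ∑ v ∈ T, w v ≤ H₀ T) ∧ ∑ v ∈ U, w v = H₀ U := by
  induction n with
  | zero =>
    intro U D₀ H₀ hcard hDe hU hsubU _ _ hH00 _ _
    have hUe : U = ∅ := Finset.card_eq_zero.mp (Nat.le_zero.mp hcard)
    refine ⟨fun _ => 0, fun _ _ => rfl, fun _ => le_rfl, ?_, ?_⟩
    · intro T hT
      have : T = ∅ := Finset.subset_empty.mp (hUe ▸ hsubU T hT)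
      simp [this, hH00]
    · simp [hUe, hH00]
  | succ n ih =>
    intro U D₀ H₀ hcard hDe hU hsubU hcup hcap hH00 hpos hsubm
    classical
    rcases eq_or_ne U ∅ with hUe | hUne
    · refine ⟨fun _ => 0, fun _ _ => rfl, fun _ => le_rfl, ?_, ?_⟩
      · intro T hT
        have : T = ∅ := Finset.subset_empty.mp (hUe ▸ hsubU T hT)
        simp [this, hH00]
      · simp [hUe, hH00]
    · have hUne' : U.Nonempty := Finset.nonempty_iff_ne_empty.mpr hUne
      set 𝒯 : Finset (Finset V) := U.powerset.filter (fun T => T ∈ D₀ ∧ T.Nonempty) with h𝒯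
      have hTne : 𝒯.Nonempty := ⟨U, by simp [h𝒯, hU, hUne']⟩
      set ε : ℝ := 𝒯.inf' hTne (fun T => H₀ T / T.card) with hεdef
      have hmem𝒯 : ∀ T ∈ D₀, T.Nonempty → T ∈ 𝒯 := by
        intro T hT hTn
        simp [h𝒯, Finset.mem_powerset, hsubU T hT, hT, hTn]
      have hε0 : 0 ≤ ε := by
        apply Finset.le_inf'
        intro T hT
        simp only [h𝒯, Finset.mem_filter] at hT
        exact div_nonneg (hpos T hT.2.1) (Nat.cast_nonneg _)
      set H₂ : Finset V → ℝ := fun T => H₀ T - ε * T.card with hH₂def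
      have hH₂0 : ∀ T ∈ D₀, 0 ≤ H₂ T := by
        intro T hT
        rcases eq_or_ne T ∅ with hTe | hTne'
        · simp [hH₂def, hTe, hH00]
        · have hTn : T.Nonempty := Finset.nonempty_iff_ne_empty.mpr hTne'
          have h1 : ε ≤ H₀ T / T.card := Finset.inf'_le _ (hmem𝒯 T hT hTn)
          have hc : (0:ℝ) < T.card := by exact_mod_cast Finset.card_pos.mpr hTn
          have := (le_div_iff₀ hc).mp h1
          simp only [hH₂def]; linarith
      have hH₂sub : ∀ T T', T ∈ D₀ → T' ∈ D₀ → H₂ (T ∪ T') + H₂ (T ∩ T') ≤ H₂ T + H₂ T' := by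
        intro T T' hT hT'
        have hcards : (T ∪ T').card + (T ∩ T').card = T.card + T'.card :=
          Finset.card_union_add_card_inter T T'
        have hcards' : ((T ∪ T').card : ℝ) + ((T ∩ T').card : ℝ) = (T.card : ℝ) + (T'.card : ℝ) := by
          exact_mod_cast hcards
        have := hsubm T T' hT hT'
        simp only [hH₂def]; nlinarith [this]
      obtain ⟨T₀, hT₀mem, hT₀eq⟩ := Finset.exists_mem_eq_inf' hTne (fun T => H₀ T / T.card)
      simp only [h𝒯, Finset.mem_filter] at hT₀mem
      have hT₀n : T₀.Nonempty := hT₀mem.2.2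
      have hT₀D : T₀ ∈ D₀ := hT₀mem.2.1
      have hT₀card : ((T₀.card : ℝ)) ≠ 0 := by
        have : 0 < T₀.card := Finset.card_pos.mpr hT₀n
        positivity
      have hεeq : ε = H₀ T₀ / T₀.card := by rw [hεdef]; exact hT₀eq
      have hH₂T₀ : H₂ T₀ = 0 := by
        simp only [hH₂def]
        rw [hεeq]
        field_simp
        ring
      set 𝒵 : Finset (Finset V) := U.powerset.filter (fun T => T ∈ D₀ ∧ H₂ T = 0) with h𝒵
      have hpThat : 𝒵.sup id ∈ D₀ ∧ H₂ (𝒵.sup id) = 0 := by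
        apply Finset.sup_induction (p := fun X => X ∈ D₀ ∧ H₂ X = 0)
        · have : (⊥ : Finset V) = ∅ := rfl
          rw [this]
          exact ⟨hDe, by simp [hH₂def, hH00]⟩
        · rintro a ⟨haD, haZ⟩ b ⟨hbD, hbZ⟩
          have hcupm := hcup a b haD hbD
          refine ⟨by simpa using hcupm, ?_⟩
          have h1 := hH₂sub a b haD hbD
          have h2 := hH₂0 _ (hcap a b haD hbD)
          have h3 := hH₂0 _ hcupm
          have : a ⊔ b = a ∪ b := rfl
          rw [this]
          linarith
        · intro T hT
          simp only [h𝒵, Finset.mem_filter] at hT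
          exact ⟨hT.2.1, hT.2.2⟩
      have hThatU : 𝒵.sup id ⊆ U := by
        have : 𝒵.sup id ≤ U := by
          apply Finset.sup_le
          intro T hT
          simp only [h𝒵, Finset.mem_filter, Finset.mem_powerset] at hT
          exact hT.1
        exact this
      have hT₀That : T₀ ⊆ 𝒵.sup id := by
        have : id T₀ ≤ 𝒵.sup id := by
          apply Finset.le_sup
          simp [h𝒵, Finset.mem_powerset, hsubU T₀ hT₀D, hT₀D, hH₂T₀]
        exact this
      set That : Finset V := 𝒵.sup id with hThat
      have hThatne : That.Nonempty := hT₀n.mono hT₀That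
      set U' : Finset V := U \ That with hU'
      have hU'card : U'.card ≤ n := by
        have : U' ⊂ U := Finset.sdiff_ssubset hThatU hThatne
        have := Finset.card_lt_card this
        omega
      set D₁ : Set (Finset V) := {R | R ⊆ U' ∧ R ∪ That ∈ D₀} with hD₁
      set H₁ : Finset V → ℝ := fun R => H₂ (R ∪ That) with hH₁
      have hkey : ∀ R R' : Finset V, (R ∪ That) ∩ (R' ∪ That) = (R ∩ R') ∪ That := by
        intro R R'; ext v; simp [Finset.mem_union, Finset.mem_inter]; tauto
      have hkey2 : ∀ R R' : Finset V, (R ∪ That) ∪ (R' ∪ That) = (R ∪ R') ∪ That := by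
        intro R R'; ext v; simp [Finset.mem_union]; tauto
      obtain ⟨w₁, hw₁supp, hw₁0, hw₁feas, hw₁sum⟩ :=
        ih U' D₁ H₁ hU'card
          (by simp [hD₁, hpThat.1])
          (by
            constructor
            · exact subset_rfl
            · rw [hU', Finset.sdiff_union_of_subset hThatU]; exact hU)
          (fun T hT => hT.1)
          (by
            rintro T T' ⟨hT1, hT2⟩ ⟨hT'1, hT'2⟩
            refine ⟨Finset.union_subset hT1 hT'1, ?_⟩
            rw [← hkey2]; exact hcup _ _ hT2 hT'2)
          (by
            rintro T T' ⟨hT1, hT2⟩ ⟨hT'1, hT'2⟩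
            refine ⟨(Finset.inter_subset_left).trans hT1, ?_⟩
            rw [← hkey]; exact hcap _ _ hT2 hT'2)
          (by simp [hH₁, hpThat.2])
          (by
            rintro T ⟨hT1, hT2⟩
            exact hH₂0 _ hT2)
          (by
            rintro T T' ⟨hT1, hT2⟩ ⟨hT'1, hT'2⟩
            simp only [hH₁]
            rw [← hkey2 T T', ← hkey T T']
            exact hH₂sub _ _ hT2 hT'2)
      refine ⟨fun v => (if v ∈ U then ε else 0) + w₁ v, ?_, ?_, ?_, ?_⟩
      · intro v hv
        show (if v ∈ U then ε else 0) + w₁ v = 0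
        rw [if_neg hv, hw₁supp v (fun hc => hv (Finset.mem_sdiff.mp hc).1), zero_add]
      · intro v
        show 0 ≤ (if v ∈ U then ε else 0) + w₁ v
        have := hw₁0 v
        have : (0:ℝ) ≤ if v ∈ U then ε else 0 := by positivity
        linarith [hw₁0 v]
      · intro T hT
        show ∑ v ∈ T, ((if v ∈ U then ε else 0) + w₁ v) ≤ H₀ T
        rw [Finset.sum_add_distrib]
        have h1 : ∑ v ∈ T, (if v ∈ U then ε else 0) = ε * T.card := by
          rw [Finset.sum_congr rfl (fun v hv => if_pos (hsubU T hT hv))]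
          simp [mul_comm]
        have hzeroThat : ∀ v ∈ T ∩ That, w₁ v = 0 := by
          intro v hv
          apply hw₁supp
          simp only [hU', Finset.mem_sdiff]
          push_neg
          intro _
          exact (Finset.mem_inter.mp hv).2
        have h2 : ∑ v ∈ T, w₁ v = ∑ v ∈ T \ That, w₁ v := by
          rw [← Finset.sum_inter_add_sum_sdiff T That w₁,
            Finset.sum_eq_zero hzeroThat, zero_add]
        have hTmem : T \ That ∈ D₁ := by
          constructor
          · intro v hv
            rw [Finset.mem_sdiff] at hv ⊢
            exact ⟨hsubU T hT hv.1, hv.2⟩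
          · rw [Finset.sdiff_union_self_eq_union]
            exact hcup _ _ hT hpThat.1
        have h3 : ∑ v ∈ T \ That, w₁ v ≤ H₂ (T ∪ That) := by
          have := hw₁feas _ hTmem
          simpa [hH₁, Finset.sdiff_union_self_eq_union] using this
        have h4 : H₂ (T ∪ That) ≤ H₂ T := by
          have h5 := hH₂sub T That hT hpThat.1
          have h6 := hH₂0 _ (hcap T That hT hpThat.1)
          linarith [hpThat.2]
        have : H₂ T = H₀ T - ε * T.card := rfl
        rw [h1, h2]
        linarith
      · show ∑ v ∈ U, ((if v ∈ U then ε else 0) + w₁ v) = H₀ U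
        have h1 : ∑ v ∈ U, (if v ∈ U then ε else 0) = ε * U.card := by
          rw [Finset.sum_congr rfl (fun v hv => if_pos hv)]
          simp [mul_comm]
        have hzeroThat : ∀ v ∈ U ∩ That, w₁ v = 0 := by
          intro v hv
          apply hw₁supp
          simp only [hU', Finset.mem_sdiff]
          push_neg
          intro _
          exact (Finset.mem_inter.mp hv).2
        have h2 : ∑ v ∈ U, w₁ v = ∑ v ∈ U', w₁ v := by
          rw [← Finset.sum_inter_add_sum_sdiff U That w₁,
            Finset.sum_eq_zero hzeroThat, zero_add]
        have h3 : H₁ U' = H₂ U := by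
          simp only [hH₁, hU', Finset.sdiff_union_of_subset hThatU]
        rw [Finset.sum_add_distrib, h1, h2, hw₁sum, h3]
        simp only [hH₂def]
        ring

lemma abel_aux {V : Type*} [Fintype V] [DecidableEq V] (n : ℕ) :
    ∀ (y g : V → ℝ),
    ((Finset.univ.image y).filter (fun x => 0 < x)).card ≤ n →
    (∀ v, 0 ≤ y v) →
    (∀ β : ℝ, 0 < β → ∑ v ∈ Finset.univ.filter (fun v => β ≤ y v), g v ≤ 0) →
    ∑ v, y v * g v ≤ 0 := by
  have hbase : ∀ (y g : V → ℝ),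
      ¬ ((Finset.univ.image y).filter (fun x => 0 < x)).Nonempty →
      (∀ v, 0 ≤ y v) → ∑ v, y v * g v ≤ 0 := by
    intro y g hne hy
    have hyz : ∀ v, y v = 0 := by
      intro v
      by_contra hv
      have h1 : 0 < y v := lt_of_le_of_ne (hy v) (Ne.symm hv)
      exact hne ⟨y v, Finset.mem_filter.mpr ⟨Finset.mem_image_of_mem y (Finset.mem_univ v), h1⟩⟩
    have : ∀ v ∈ Finset.univ, y v * g v = 0 := fun v _ => by rw [hyz v, zero_mul]
    rw [Finset.sum_congr rfl this]
    simp
  induction n with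
  | zero =>
    intro y g hcard hy hβ
    apply hbase y g _ hy
    intro hne
    have := Finset.card_pos.mpr hne
    omega
  | succ n ih =>
    intro y g hcard hy hβ
    by_cases hne : ((Finset.univ.image y).filter (fun x => 0 < x)).Nonempty
    · set γ : ℝ := (((Finset.univ.image y).filter (fun x => 0 < x)).min' hne) with hγ
      have hγmem := Finset.min'_mem _ hne
      rw [← hγ] at hγmem
      have hγpos : 0 < γ := (Finset.mem_filter.mp hγmem).2
      have hγmin : ∀ x ∈ Finset.univ.image y, 0 < x → γ ≤ x := by
        intro x hx h0
        exact Finset.min'_le _ _ (Finset.mem_filter.mpr ⟨hx, h0⟩)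
      have hsmall : ∀ v, ¬ (γ ≤ y v) → y v = 0 := by
        intro v hv
        by_contra h
        have h1 : 0 < y v := lt_of_le_of_ne (hy v) (Ne.symm h)
        exact hv (hγmin _ (Finset.mem_image_of_mem y (Finset.mem_univ v)) h1)
      set y' : V → ℝ := fun v => max (y v - γ) 0 with hy'def
      have hy'0 : ∀ v, 0 ≤ y' v := fun v => le_max_right _ _
      have hrep : ∀ v, y v = y' v + γ * (if γ ≤ y v then 1 else 0) := by
        intro v
        by_cases hv : γ ≤ y v
        · rw [if_pos hv]
          simp only [hy'def]
          rw [max_eq_left (by linarith)]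
          ring
        · rw [if_neg hv]
          have h0 : y v = 0 := hsmall v hv
          simp only [hy'def, h0]
          rw [max_eq_right (by linarith)]
          ring
      have hcard' : ((Finset.univ.image y').filter (fun x => 0 < x)).card ≤ n := by
        have hsub : ((Finset.univ.image y').filter (fun x => 0 < x)) ⊆
            (((Finset.univ.image y).filter (fun x => 0 < x)).erase γ).image (fun x => x - γ) := by
          intro x hx
          obtain ⟨hx1, hx2⟩ := Finset.mem_filter.mp hx
          obtain ⟨v, _, hv⟩ := Finset.mem_image.mp hx1
          have hpos : 0 < y v - γ := by
            by_contra hc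
            push_neg at hc
            have : y' v = 0 := by simp only [hy'def]; exact max_eq_right hc
            rw [hv] at this; linarith
          have hxval : x = y v - γ := by
            rw [← hv]; simp only [hy'def]; exact max_eq_left hpos.le
          apply Finset.mem_image.mpr
          refine ⟨y v, ?_, hxval.symm⟩
          apply Finset.mem_erase.mpr
          constructor
          · intro hc; rw [hc] at hpos; linarith
          · exact Finset.mem_filter.mpr ⟨Finset.mem_image_of_mem y (Finset.mem_univ v),
              by linarith⟩
        calc ((Finset.univ.image y').filter (fun x => 0 < x)).card
            ≤ _ := Finset.card_le_card hsub
          _ ≤ (((Finset.univ.image y).filter (fun x => 0 < x)).erase γ).card :=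
              Finset.card_image_le
          _ = ((Finset.univ.image y).filter (fun x => 0 < x)).card - 1 :=
              Finset.card_erase_of_mem hγmem
          _ ≤ n := by omega
      have hβ' : ∀ β : ℝ, 0 < β → ∑ v ∈ Finset.univ.filter (fun v => β ≤ y' v), g v ≤ 0 := by
        intro β hβpos
        have : Finset.univ.filter (fun v => β ≤ y' v)
            = Finset.univ.filter (fun v => β + γ ≤ y v) := by
          apply Finset.filter_congr
          intro v _
          simp only [hy'def, le_max_iff, eq_iff_iff]
          constructor
          · rintro (h | h)
            · linarith
            · linarith
          · intro h; left; linarith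
        rw [this]
        exact hβ (β + γ) (by linarith)
      have hih := ih y' g hcard' hy'0 hβ'
      have hsplit : ∑ v, y v * g v
          = (∑ v, y' v * g v) + γ * ∑ v ∈ Finset.univ.filter (fun v => γ ≤ y v), g v := by
        rw [Finset.sum_filter, Finset.mul_sum, ← Finset.sum_add_distrib]
        apply Finset.sum_congr rfl
        intro v _
        by_cases hv : γ ≤ y v
        · nth_rewrite 1 [hrep v]
          simp only [if_pos hv]
          ring
        · nth_rewrite 1 [hrep v]
          simp only [if_neg hv]
          ring
      rw [hsplit]
      have h2 := hβ γ hγpos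
      nlinarith
    · exact hbase y g hne hy


/-- The vector `z(v) = max{ sup{α : v ∈ A^α}, 0 }` built from the maximal minimizers
`A^α` of `H(S) + α|S|` minimizes `h(x) + (1/2)‖x‖²` over the nonnegative orthant,
where `h` is the Lovász extension of `H`. -/
theorem threshold_vector_minimizes {V : Type*} [Fintype V] [DecidableEq V]
    (D : Set (Finset V)) (hD0 : ∅ ∈ D) (hDV : Finset.univ ∈ D)
    (hDu : ∀ S T, S ∈ D → T ∈ D → S ∪ T ∈ D)
    (hDi : ∀ S T, S ∈ D → T ∈ D → S ∩ T ∈ D)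
    (H : Finset V → ℝ) (hH0 : H ∅ = 0)
    (hsub : ∀ S T, S ∈ D → T ∈ D → H (S ∪ T) + H (S ∩ T) ≤ H S + H T)
    (hB : ∃ w : V → ℝ, (∀ S ∈ D, ∑ v ∈ S, w v ≤ H S) ∧ ∑ v, w v = H Finset.univ)
    (A : ℝ → Finset V)
    (hAD : ∀ α, A α ∈ D)
    (hAmin : ∀ α, ∀ S ∈ D, H (A α) + α * (A α).card ≤ H S + α * S.card)
    (hAmax : ∀ α, ∀ S ∈ D,
      (∀ T ∈ D, H S + α * S.card ≤ H T + α * T.card) → S ⊆ A α)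
    (z : V → ℝ) (hz : ∀ v, z v = max (sSup {α : ℝ | v ∈ A α}) 0) :
    let B : Set (V → ℝ) :=
      {w | (∀ S ∈ D, ∑ v ∈ S, w v ≤ H S) ∧ ∑ v, w v = H Finset.univ}
    let h : (V → ℝ) → EReal := fun x => ⨆ w ∈ B, ((∑ v, x v * w v : ℝ) : EReal)
    let obj : (V → ℝ) → EReal := fun x => h x + ((2⁻¹ * ∑ v, (x v) ^ 2 : ℝ) : EReal)
    (∀ v, 0 ≤ z v) ∧ ∀ x : V → ℝ, (∀ v, 0 ≤ x v) → obj z ≤ obj x := by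
  classical
  intro B h obj
  -- nonnegativity of z
  have hz0 : ∀ v, 0 ≤ z v := fun v => by rw [hz v]; exact le_max_right _ _
  -- A is antitone
  have hanti : ∀ α β : ℝ, α < β → A β ⊆ A α := by
    intro α β hαβ
    have hs := hsub (A α) (A β) (hAD α) (hAD β)
    have h1 := hAmin α (A α ∪ A β) (hDu _ _ (hAD α) (hAD β))
    have h2 := hAmin β (A α ∩ A β) (hDi _ _ (hAD α) (hAD β))
    have hcard : ((A α ∪ A β).card : ℝ) + ((A α ∩ A β).card : ℝ)
        = ((A α).card : ℝ) + ((A β).card : ℝ) := by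
      exact_mod_cast Finset.card_union_add_card_inter (A α) (A β)
    have hcardle : ((A α).card : ℝ) ≤ ((A α ∪ A β).card : ℝ) := by
      exact_mod_cast Finset.card_le_card (Finset.subset_union_left (s₁ := A α) (s₂ := A β))
    have hcle : ((A α ∪ A β).card : ℝ) ≤ ((A α).card : ℝ) := by
      by_contra hcon
      push_neg at hcon
      have hcardβ : β * ((A α ∪ A β).card : ℝ) + β * ((A α ∩ A β).card : ℝ)
          = β * ((A α).card : ℝ) + β * ((A β).card : ℝ) := by
        linear_combination β * hcard
      nlinarith [mul_pos (sub_pos.mpr hαβ) (sub_pos.mpr hcon), hcardβ]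
    have hEq : A α = A α ∪ A β := by
      apply Finset.eq_of_subset_of_card_le Finset.subset_union_left
      exact_mod_cast hcle
    intro v hv
    rw [hEq]
    exact Finset.mem_union_right _ hv
  -- crude bound on |H|
  set c : ℝ := ∑ S ∈ (Finset.univ : Finset V).powerset, |H S| with hcdef
  have hc : ∀ S : Finset V, |H S| ≤ c := by
    intro S
    apply Finset.single_le_sum (f := fun T => |H T|) (fun T _ => abs_nonneg (H T))
    exact Finset.mem_powerset.mpr (Finset.subset_univ S)
  have hc0 : (0:ℝ) ≤ c := le_trans (abs_nonneg _) (hc ∅)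
  -- for very negative α, everything is in A α
  have hlow : ∀ α : ℝ, α ≤ -(2*c+1) → ∀ v, v ∈ A α := by
    intro α hα v
    have huniv : (Finset.univ : Finset V) ⊆ A α := by
      apply hAmax α Finset.univ hDV
      intro T hT
      rcases eq_or_ne T Finset.univ with hTe | hTne
      · rw [hTe]
      · have hTcard : T.card < (Finset.univ : Finset V).card :=
          Finset.card_lt_card (Finset.ssubset_univ_iff.mpr hTne)
        have h1 : (T.card : ℝ) + 1 ≤ ((Finset.univ : Finset V).card : ℝ) := by
          exact_mod_cast hTcard
        have h2 := hc T
        have h3 := hc Finset.univ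
        have h4 : α * ((Finset.univ : Finset V).card : ℝ) - α * (T.card : ℝ)
            ≤ α := by nlinarith
        have h5 : H Finset.univ - H T ≤ 2*c := by
          cases' abs_le.mp h2 with h2a h2b
          cases' abs_le.mp h3 with h3a h3b
          linarith
        linarith
    exact huniv (Finset.mem_univ v)
  have hneA : ∀ v, {α : ℝ | v ∈ A α}.Nonempty :=
    fun v => ⟨-(2*c+1), hlow _ le_rfl v⟩
  have hbddA : ∀ v, BddAbove {α : ℝ | v ∈ A α} := by
    intro v
    refine ⟨c, ?_⟩
    intro α hα
    have hne : (A α).Nonempty := ⟨v, hα⟩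
    have h1 := hAmin α ∅ hD0
    rw [hH0] at h1
    simp only [Finset.card_empty, Nat.cast_zero, mul_zero, add_zero] at h1
    have hcard1 : (1:ℝ) ≤ ((A α).card : ℝ) := by
      exact_mod_cast Finset.card_pos.mpr hne
    have h2 := hc (A α)
    cases' abs_le.mp h2 with h2a h2b
    rcases le_or_gt α 0 with hα0 | hα0
    · linarith
    · nlinarith
  set t : V → ℝ := fun v => sSup {α : ℝ | v ∈ A α} with htdef
  have hzt : ∀ v, z v = max (t v) 0 := fun v => hz v
  have hM5 : ∀ v (α : ℝ), v ∈ A α → α ≤ t v := fun v α hα => le_csSup (hbddA v) hα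
  have hM4 : ∀ v (α : ℝ), α < t v → v ∈ A α := by
    intro v α hα
    obtain ⟨β, hβmem, hβ⟩ := exists_lt_of_lt_csSup (hneA v) hα
    exact hanti α β hβ hβmem
  have hZ2a : ∀ α : ℝ, 0 < α → ∀ v, v ∈ A α → α ≤ z v := by
    intro α hα v hv
    rw [hzt v]
    exact le_max_of_le_left (hM5 v α hv)
  have hZ2b : ∀ α : ℝ, 0 < α → ∀ v, α < z v → v ∈ A α := by
    intro α hα v hv
    rw [hzt v] at hv
    rcases lt_max_iff.mp hv with h1 | h1
    · exact hM4 v α h1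
    · linarith
  -- level sets
  set L : ℝ → Finset V := fun β => Finset.univ.filter (fun v => β ≤ z v) with hLdef
  set Pp : ℝ → Finset V := fun γ => Finset.univ.filter (fun v => γ < z v) with hPpdef
  have hmemL : ∀ (β : ℝ) v, v ∈ L β ↔ β ≤ z v := by
    intro β v; simp [hLdef]
  have hmemPp : ∀ (γ : ℝ) v, v ∈ Pp γ ↔ γ < z v := by
    intro γ v; simp [hPpdef]
  -- K1 : identification of L β with A α for α slightly below β
  have hK1 : ∀ β : ℝ, 0 < β → ∃ m : ℝ, 0 ≤ m ∧ m < β ∧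
      ∀ α : ℝ, m < α → α < β → A α = L β := by
    intro β hβ
    set F := (insert (0:ℝ) (Finset.univ.image z)).filter (fun x => x < β) with hF
    have hFne : F.Nonempty := ⟨0, by simp [hF, hβ]⟩
    set m := F.max' hFne with hm
    have hmmem := F.max'_mem hFne
    rw [← hm] at hmmem
    have hm1 : m < β := (Finset.mem_filter.mp hmmem).2
    have hm0 : 0 ≤ m := Finset.le_max' F 0 (by simp [hF, hβ])
    have hmval : ∀ x, x ∈ Finset.univ.image z → x < β → x ≤ m := by
      intro x hx hxβ
      exact Finset.le_max' F x (Finset.mem_filter.mpr ⟨Finset.mem_insert_of_mem hx, hxβ⟩)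
    refine ⟨m, hm0, hm1, ?_⟩
    intro α hmα hαβ
    apply Finset.Subset.antisymm
    · intro v hv
      have h1 : α ≤ z v := hZ2a α (by linarith) v hv
      rw [hmemL]
      by_contra hcon
      push_neg at hcon
      have := hmval (z v) (Finset.mem_image_of_mem z (Finset.mem_univ v)) hcon
      linarith
    · intro v hv
      have hzv : β ≤ z v := (hmemL β v).mp hv
      exact hZ2b α (by linarith) v (by linarith)
  have hLD : ∀ β : ℝ, 0 < β → L β ∈ D := by
    intro β hβ
    obtain ⟨m, hm0, hm1, hAe⟩ := hK1 β hβ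
    rw [← hAe ((m+β)/2) (by linarith) (by linarith)]
    exact hAD _
  -- K3 : L β minimizes H + β card
  have hK3 : ∀ β : ℝ, 0 < β → ∀ S ∈ D,
      H (L β) + β * ((L β).card : ℝ) ≤ H S + β * (S.card : ℝ) := by
    intro β hβ S hS
    obtain ⟨m, hm0, hm1, hAe⟩ := hK1 β hβ
    have key : ∀ ε : ℝ, 0 < ε → ε < β - m →
        (H (L β) + β * ((L β).card : ℝ)) - (H S + β * (S.card : ℝ))
          ≤ ε * (((L β).card : ℝ) - (S.card : ℝ)) := by
      intro ε hε1 hε2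
      have hα := hAmin (β - ε) S hS
      rw [hAe (β-ε) (by linarith) (by linarith)] at hα
      nlinarith [hα]
    have := eps_le_aux (a := (H (L β) + β * ((L β).card : ℝ)) - (H S + β * (S.card : ℝ)))
      (c := ((L β).card : ℝ) - (S.card : ℝ)) (δ := β - m) (by linarith) key
    linarith
  -- K4 : Pp γ is in D, minimizes H + γ card, and equals a level set L M
  have hK4 : ∀ γ : ℝ, 0 ≤ γ → ∃ M : ℝ, γ < M ∧ Pp γ = L M ∧ Pp γ ∈ D ∧
      (∀ x, x ∈ Finset.univ.image z → γ < x → M ≤ x) ∧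
      (∀ S ∈ D, H (Pp γ) + γ * ((Pp γ).card : ℝ) ≤ H S + γ * (S.card : ℝ)) := by
    intro γ hγ
    set G := (Finset.univ.image z).filter (fun x => γ < x) with hG
    set M : ℝ := if hGn : G.Nonempty then G.min' hGn else γ + 1 with hM
    have hMγ : γ < M := by
      rw [hM]
      split
      · next hGn =>
        have := G.min'_mem hGn
        exact (Finset.mem_filter.mp this).2
      · linarith
    have hMle : ∀ x, x ∈ Finset.univ.image z → γ < x → M ≤ x := by
      intro x hx hγx
      have hxG : x ∈ G := Finset.mem_filter.mpr ⟨hx, hγx⟩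
      rw [hM]
      split
      · next hGn => exact Finset.min'_le G x hxG
      · next hGn => exact absurd ⟨x, hxG⟩ hGn
    have hPL : Pp γ = L M := by
      ext v
      rw [hmemPp, hmemL]
      constructor
      · intro hv
        exact hMle (z v) (Finset.mem_image_of_mem z (Finset.mem_univ v)) hv
      · intro hv; linarith
    have hAe : ∀ α : ℝ, γ < α → α < M → A α = Pp γ := by
      intro α hγα hαM
      apply Finset.Subset.antisymm
      · intro v hv
        rw [hmemPp]
        have := hZ2a α (by linarith) v hv
        linarith
      · intro v hv
        rw [hmemPp] at hv
        have hM2 : M ≤ z v := hMle (z v) (Finset.mem_image_of_mem z (Finset.mem_univ v)) hv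
        exact hZ2b α (by linarith) v (by linarith)
    have hPD : Pp γ ∈ D := by
      rw [← hAe ((γ+M)/2) (by linarith) (by linarith)]
      exact hAD _
    refine ⟨M, hMγ, hPL, hPD, hMle, ?_⟩
    intro S hS
    have key : ∀ ε : ℝ, 0 < ε → ε < M - γ →
        (H (Pp γ) + γ * ((Pp γ).card : ℝ)) - (H S + γ * (S.card : ℝ))
          ≤ ε * ((S.card : ℝ) - ((Pp γ).card : ℝ)) := by
      intro ε hε1 hε2
      have hα := hAmin (γ + ε) S hS
      rw [hAe (γ+ε) (by linarith) (by linarith)] at hα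
      nlinarith [hα]
    have := eps_le_aux (a := (H (Pp γ) + γ * ((Pp γ).card : ℝ)) - (H S + γ * (S.card : ℝ)))
      (c := (S.card : ℝ) - ((Pp γ).card : ℝ)) (δ := M - γ) (by linarith) key
    linarith
  -- tightness : H (L β) = -∑_{L β} z  for β > 0
  have htight : ∀ n : ℕ, ∀ β : ℝ, 0 < β →
      ((Finset.univ.image z).filter (fun x => β ≤ x)).card ≤ n →
      H (L β) = -∑ v ∈ L β, z v := by
    intro n
    induction n with
    | zero =>
      intro β hβ hcard
      have hLe : L β = ∅ := by
        rw [Finset.eq_empty_iff_forall_notMem]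
        intro v hv
        have h2 : ((Finset.univ.image z).filter (fun x => β ≤ x)).Nonempty :=
          ⟨z v, Finset.mem_filter.mpr
            ⟨Finset.mem_image_of_mem z (Finset.mem_univ v), (hmemL β v).mp hv⟩⟩
        have := Finset.card_pos.mpr h2
        omega
      rw [hLe]
      simp [hH0]
    | succ n ih =>
      intro β hβ hcard
      by_cases hne : ((Finset.univ.image z).filter (fun x => β ≤ x)).Nonempty
      · set γ := ((Finset.univ.image z).filter (fun x => β ≤ x)).min' hne with hγdef
        have hγmem := Finset.min'_mem _ hne
        rw [← hγdef] at hγmem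
        have hγim : γ ∈ Finset.univ.image z := (Finset.mem_filter.mp hγmem).1
        have hβγ : β ≤ γ := (Finset.mem_filter.mp hγmem).2
        have hγpos : 0 < γ := lt_of_lt_of_le hβ hβγ
        have hγmin : ∀ x, x ∈ Finset.univ.image z → β ≤ x → γ ≤ x := by
          intro x hx hβx
          exact Finset.min'_le _ x (Finset.mem_filter.mpr ⟨hx, hβx⟩)
        have hLβγ : L β = L γ := by
          ext v
          rw [hmemL, hmemL]
          constructor
          · intro hv
            exact hγmin (z v) (Finset.mem_image_of_mem z (Finset.mem_univ v)) hv
          · intro hv; linarith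
        obtain ⟨M, hMγ, hPL, hPD, hMmin, hPmin⟩ := hK4 γ hγpos.le
        have hfe : (Finset.univ.image z).filter (fun x => M ≤ x)
            = ((Finset.univ.image z).filter (fun x => β ≤ x)).erase γ := by
          ext x
          simp only [Finset.mem_filter, Finset.mem_erase]
          constructor
          · rintro ⟨hx1, hx2⟩
            exact ⟨by intro hcon; rw [hcon] at hx2; linarith, hx1, by linarith⟩
          · rintro ⟨hx1, hx2, hx3⟩
            refine ⟨hx2, ?_⟩
            have hγx : γ ≤ x := hγmin x hx2 hx3
            have : γ < x := lt_of_le_of_ne hγx (Ne.symm hx1)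
            exact hMmin x hx2 this
        have hcard2 : ((Finset.univ.image z).filter (fun x => M ≤ x)).card ≤ n := by
          rw [hfe, Finset.card_erase_of_mem hγmem]
          omega
        have hMpos : 0 < M := lt_trans hγpos hMγ
        have hIH : H (L M) = -∑ v ∈ L M, z v := ih M hMpos hcard2
        have e1 := hK3 γ hγpos (Pp γ) hPD
        have e2 := hPmin (L γ) (hLD γ hγpos)
        have hsubM : L M ⊆ L γ := by
          intro v hv
          rw [hmemL] at hv ⊢
          linarith
        have hdiffval : ∀ v ∈ L γ \ L M, z v = γ := by
          intro v hv
          rw [Finset.mem_sdiff, hmemL, hmemL] at hv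
          obtain ⟨hv1, hv2⟩ := hv
          push_neg at hv2
          by_contra hcon
          have hlt : γ < z v := lt_of_le_of_ne hv1 (Ne.symm hcon)
          have := hMmin (z v) (Finset.mem_image_of_mem z (Finset.mem_univ v)) hlt
          linarith
        have hsumsplit : ∑ v ∈ L γ \ L M, z v + ∑ v ∈ L M, z v = ∑ v ∈ L γ, z v :=
          Finset.sum_sdiff hsubM
        have hsdval : ∑ v ∈ L γ \ L M, z v = γ * (((L γ).card : ℝ) - ((L M).card : ℝ)) := by
          rw [Finset.sum_congr rfl hdiffval, Finset.sum_const, Finset.card_sdiff_of_subset hsubM]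
          rw [nsmul_eq_mul, Nat.cast_sub (Finset.card_le_card hsubM)]
          ring
        have hPLcard : ((Pp γ).card : ℝ) = ((L M).card : ℝ) := by rw [hPL]
        have hPLval : H (Pp γ) = H (L M) := by rw [hPL]
        rw [hLβγ]
        have heq : H (L γ) + γ * ((L γ).card : ℝ) = H (Pp γ) + γ * ((Pp γ).card : ℝ) :=
          le_antisymm e1 e2
        rw [hPLval, hPLcard] at heq
        linarith
      · have hLe : L β = ∅ := by
          rw [Finset.eq_empty_iff_forall_notMem]
          intro v hv
          exact hne ⟨z v, Finset.mem_filter.mpr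
            ⟨Finset.mem_image_of_mem z (Finset.mem_univ v), (hmemL β v).mp hv⟩⟩
        rw [hLe]
        simp [hH0]
  -- feasibility on the positive part
  have hfeaspos : ∀ n : ℕ, ∀ β : ℝ, 0 < β →
      ((Finset.univ.image z).filter (fun x => β ≤ x)).card ≤ n →
      ∀ S ∈ D, ∑ v ∈ S ∩ L β, (-(z v)) ≤ H (S ∩ L β) := by
    intro n
    induction n with
    | zero =>
      intro β hβ hcard S hS
      have hLe : L β = ∅ := by
        rw [Finset.eq_empty_iff_forall_notMem]
        intro v hv
        have h2 : ((Finset.univ.image z).filter (fun x => β ≤ x)).Nonempty :=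
          ⟨z v, Finset.mem_filter.mpr
            ⟨Finset.mem_image_of_mem z (Finset.mem_univ v), (hmemL β v).mp hv⟩⟩
        have := Finset.card_pos.mpr h2
        omega
      rw [hLe, Finset.inter_empty]
      simp [hH0]
    | succ n ih =>
      intro β hβ hcard S hS
      by_cases hne : ((Finset.univ.image z).filter (fun x => β ≤ x)).Nonempty
      · set γ := ((Finset.univ.image z).filter (fun x => β ≤ x)).min' hne with hγdef
        have hγmem := Finset.min'_mem _ hne
        rw [← hγdef] at hγmem
        have hγim : γ ∈ Finset.univ.image z := (Finset.mem_filter.mp hγmem).1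
        have hβγ : β ≤ γ := (Finset.mem_filter.mp hγmem).2
        have hγpos : 0 < γ := lt_of_lt_of_le hβ hβγ
        have hγmin : ∀ x, x ∈ Finset.univ.image z → β ≤ x → γ ≤ x := by
          intro x hx hβx
          exact Finset.min'_le _ x (Finset.mem_filter.mpr ⟨hx, hβx⟩)
        have hLβγ : L β = L γ := by
          ext v
          rw [hmemL, hmemL]
          constructor
          · intro hv
            exact hγmin (z v) (Finset.mem_image_of_mem z (Finset.mem_univ v)) hv
          · intro hv; linarith
        obtain ⟨M, hMγ, hPL, hPD, hMmin, hPmin⟩ := hK4 γ hγpos.le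
        have hfe : (Finset.univ.image z).filter (fun x => M ≤ x)
            = ((Finset.univ.image z).filter (fun x => β ≤ x)).erase γ := by
          ext x
          simp only [Finset.mem_filter, Finset.mem_erase]
          constructor
          · rintro ⟨hx1, hx2⟩
            exact ⟨by intro hcon; rw [hcon] at hx2; linarith, hx1, by linarith⟩
          · rintro ⟨hx1, hx2, hx3⟩
            refine ⟨hx2, ?_⟩
            have hγx : γ ≤ x := hγmin x hx2 hx3
            have : γ < x := lt_of_le_of_ne hγx (Ne.symm hx1)
            exact hMmin x hx2 this
        have hcard2 : ((Finset.univ.image z).filter (fun x => M ≤ x)).card ≤ n := by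
          rw [hfe, Finset.card_erase_of_mem hγmem]
          omega
        have hMpos : 0 < M := lt_trans hγpos hMγ
        have hIH := ih M hMpos hcard2 S hS
        have hsubM : L M ⊆ L γ := by
          intro v hv
          rw [hmemL] at hv ⊢
          linarith
        have hXD : S ∩ L γ ∈ D := hDi S (L γ) hS (hLD γ hγpos)
        have hXM : (S ∩ L γ) ∩ L M = S ∩ L M := by
          rw [Finset.inter_assoc, Finset.inter_eq_right.mpr hsubM]
        have hdiffval : ∀ v ∈ (S ∩ L γ) \ L M, z v = γ := by
          intro v hv
          rw [Finset.mem_sdiff, Finset.mem_inter, hmemL, hmemL] at hv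
          obtain ⟨⟨_, hv1⟩, hv2⟩ := hv
          push_neg at hv2
          by_contra hcon
          have hlt : γ < z v := lt_of_le_of_ne hv1 (Ne.symm hcon)
          have := hMmin (z v) (Finset.mem_image_of_mem z (Finset.mem_univ v)) hlt
          linarith
        have hsplit : ∑ v ∈ S ∩ L γ, (-(z v))
            = ∑ v ∈ (S ∩ L γ) ∩ L M, (-(z v)) + ∑ v ∈ (S ∩ L γ) \ L M, (-(z v)) :=
          (Finset.sum_inter_add_sum_sdiff _ _ _).symm
        have hsdcard : (((S ∩ L γ) \ L M).card : ℝ)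
            = ((S ∩ L γ).card : ℝ) - (((S ∩ L γ) ∩ L M).card : ℝ) := by
          rw [← Finset.sdiff_inter_self_left (S ∩ L γ) (L M)]
          rw [Finset.card_sdiff_of_subset Finset.inter_subset_left]
          rw [Nat.cast_sub (Finset.card_le_card Finset.inter_subset_left)]
        have hsdval : ∑ v ∈ (S ∩ L γ) \ L M, (-(z v))
            = -(γ * (((S ∩ L γ).card : ℝ) - (((S ∩ L γ) ∩ L M).card : ℝ))) := by
          have hcg : ∀ v ∈ (S ∩ L γ) \ L M, -(z v) = -γ := fun v hv => by rw [hdiffval v hv]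
          rw [Finset.sum_congr rfl hcg, Finset.sum_const, nsmul_eq_mul, hsdcard]
          ring
        -- exchange inequality
        have h1 := hsub (S ∩ L γ) (Pp γ) hXD hPD
        have h2 := hPmin ((S ∩ L γ) ∪ Pp γ) (hDu _ _ hXD hPD)
        have hcard3 : (((S ∩ L γ) ∪ Pp γ).card : ℝ) + (((S ∩ L γ) ∩ Pp γ).card : ℝ)
            = ((S ∩ L γ).card : ℝ) + ((Pp γ).card : ℝ) := by
          exact_mod_cast Finset.card_union_add_card_inter (S ∩ L γ) (Pp γ)
        have hcard4 : γ * (((S ∩ L γ) ∪ Pp γ).card : ℝ) - γ * ((Pp γ).card : ℝ)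
            = γ * ((S ∩ L γ).card : ℝ) - γ * (((S ∩ L γ) ∩ Pp γ).card : ℝ) := by
          linear_combination γ * hcard3
        have hkey : H ((S ∩ L γ) ∩ Pp γ) ≤ H (S ∩ L γ)
            + γ * (((S ∩ L γ).card : ℝ) - (((S ∩ L γ) ∩ Pp γ).card : ℝ)) := by
          linarith [h1, h2, hcard4]
        have hXPp : (S ∩ L γ) ∩ Pp γ = (S ∩ L γ) ∩ L M := by rw [hPL]
        rw [hXPp] at hkey
        have hIH2 : ∑ v ∈ (S ∩ L γ) ∩ L M, (-(z v)) ≤ H ((S ∩ L γ) ∩ L M) := by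
          rw [hXM]
          exact hIH
        rw [hLβγ, hsplit, hsdval]
        linarith
      · have hLe : L β = ∅ := by
          rw [Finset.eq_empty_iff_forall_notMem]
          intro v hv
          exact hne ⟨z v, Finset.mem_filter.mpr
            ⟨Finset.mem_image_of_mem z (Finset.mem_univ v), (hmemL β v).mp hv⟩⟩
        rw [hLe, Finset.inter_empty]
        simp [hH0]
  -- the zero layer : a nonnegative base vector
  obtain ⟨M₀, hM₀γ, hPLM₀, hP0D, hM₀min, hP0min⟩ := hK4 0 le_rfl
  have hHP : H (Pp 0) = -∑ v ∈ Pp 0, z v := by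
    rw [hPLM₀]
    exact htight _ M₀ hM₀γ le_rfl
  have hcupP : ∀ R R' : Finset V, (R ∪ Pp 0) ∪ (R' ∪ Pp 0) = (R ∪ R') ∪ Pp 0 := by
    intro R R'; ext u; simp only [Finset.mem_union]; tauto
  have hcapP : ∀ R R' : Finset V, (R ∪ Pp 0) ∩ (R' ∪ Pp 0) = (R ∩ R') ∪ Pp 0 := by
    intro R R'; ext u; simp only [Finset.mem_union, Finset.mem_inter]; tauto
  obtain ⟨w₀, hw₀supp, hw₀0, hw₀feas, hw₀sum⟩ :=
    nonneg_base (Finset.univ \ Pp 0).card (Finset.univ \ Pp 0)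
      {T | T ⊆ Finset.univ \ Pp 0 ∧ T ∪ Pp 0 ∈ D}
      (fun T => H (T ∪ Pp 0) - H (Pp 0)) le_rfl
      ⟨Finset.empty_subset _, by rw [Finset.empty_union]; exact hP0D⟩
      ⟨subset_rfl, by rw [Finset.sdiff_union_of_subset (Finset.subset_univ _)]; exact hDV⟩
      (fun T hT => hT.1)
      (fun T T' hT hT' => ⟨Finset.union_subset hT.1 hT'.1,
        by rw [← hcupP]; exact hDu _ _ hT.2 hT'.2⟩)
      (fun T T' hT hT' => ⟨Finset.Subset.trans Finset.inter_subset_left hT.1,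
        by rw [← hcapP]; exact hDi _ _ hT.2 hT'.2⟩)
      (by show H (∅ ∪ Pp 0) - H (Pp 0) = 0
          rw [Finset.empty_union]; ring)
      (fun T hT => by
        show 0 ≤ H (T ∪ Pp 0) - H (Pp 0)
        have := hP0min (T ∪ Pp 0) hT.2
        simp only [zero_mul, add_zero] at this
        linarith)
      (fun T T' hT hT' => by
        show H ((T ∪ T') ∪ Pp 0) - H (Pp 0) + (H ((T ∩ T') ∪ Pp 0) - H (Pp 0))
          ≤ (H (T ∪ Pp 0) - H (Pp 0)) + (H (T' ∪ Pp 0) - H (Pp 0))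
        have := hsub (T ∪ Pp 0) (T' ∪ Pp 0) hT.2 hT'.2
        rw [hcupP, hcapP] at this
        linarith)
  -- the optimal point w
  set w : V → ℝ := fun v => if v ∈ Pp 0 then -(z v) else w₀ v with hwdef
  have hwPp : ∀ v ∈ Pp 0, w v = -(z v) := by
    intro v hv
    show (if v ∈ Pp 0 then -(z v) else w₀ v) = -(z v)
    rw [if_pos hv]
  have hwnPp : ∀ v, v ∉ Pp 0 → w v = w₀ v := by
    intro v hv
    show (if v ∈ Pp 0 then -(z v) else w₀ v) = w₀ v
    rw [if_neg hv]
  have hznP : ∀ v, v ∉ Pp 0 → z v = 0 := by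
    intro v hv
    have hne : ¬ (0 < z v) := fun hcon => hv ((hmemPp 0 v).mpr hcon)
    push_neg at hne
    linarith [hz0 v]
  have hLsubP : ∀ β : ℝ, 0 < β → L β ⊆ Pp 0 := by
    intro β hβ v hv
    rw [hmemPp]
    have := (hmemL β v).mp hv
    linarith
  -- tightness of w on positive level sets
  have hwL : ∀ β : ℝ, 0 < β → ∑ v ∈ L β, w v = H (L β) := by
    intro β hβ
    have h1 : ∑ v ∈ L β, w v = ∑ v ∈ L β, -(z v) :=
      Finset.sum_congr rfl (fun v hv => hwPp v (hLsubP β hβ hv))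
    rw [h1, htight _ β hβ le_rfl]
    rw [← Finset.sum_neg_distrib]
  -- feasibility of w
  have hwfeas : ∀ S ∈ D, ∑ v ∈ S, w v ≤ H S := by
    intro S hS
    have hsplit : ∑ v ∈ S ∩ Pp 0, w v + ∑ v ∈ S \ Pp 0, w v = ∑ v ∈ S, w v :=
      Finset.sum_inter_add_sum_sdiff S (Pp 0) w
    have h1 : ∑ v ∈ S ∩ Pp 0, w v = ∑ v ∈ S ∩ Pp 0, -(z v) :=
      Finset.sum_congr rfl (fun v hv => hwPp v (Finset.mem_inter.mp hv).2)
    have h10 : ∑ v ∈ S ∩ Pp 0, -(z v) ≤ H (S ∩ Pp 0) := by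
      have h2 : S ∩ Pp 0 = S ∩ L M₀ := by rw [hPLM₀]
      rw [h2]
      exact hfeaspos _ M₀ hM₀γ le_rfl S hS
    have h4 : ∑ v ∈ S \ Pp 0, w v = ∑ v ∈ S \ Pp 0, w₀ v :=
      Finset.sum_congr rfl (fun v hv => hwnPp v (Finset.mem_sdiff.mp hv).2)
    have h5 : S \ Pp 0 ∈ {T | T ⊆ Finset.univ \ Pp 0 ∧ T ∪ Pp 0 ∈ D} := by
      constructor
      · intro v hv
        rw [Finset.mem_sdiff] at hv ⊢
        exact ⟨Finset.mem_univ v, hv.2⟩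
      · rw [Finset.sdiff_union_self_eq_union]
        exact hDu S (Pp 0) hS hP0D
    have h6 := hw₀feas _ h5
    have h7 : (S \ Pp 0) ∪ Pp 0 = S ∪ Pp 0 := Finset.sdiff_union_self_eq_union
    rw [h7] at h6
    have h8 := hsub S (Pp 0) hS hP0D
    linarith
  -- total sum of w
  have hwsum : ∑ v, w v = H Finset.univ := by
    have hsplit : ∑ v ∈ Finset.univ ∩ Pp 0, w v + ∑ v ∈ Finset.univ \ Pp 0, w v
        = ∑ v, w v := Finset.sum_inter_add_sum_sdiff Finset.univ (Pp 0) w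
    have huP : Finset.univ ∩ Pp 0 = Pp 0 := Finset.univ_inter _
    have h1 : ∑ v ∈ Pp 0, w v = ∑ v ∈ Pp 0, -(z v) :=
      Finset.sum_congr rfl (fun v hv => hwPp v hv)
    have h1' : ∑ v ∈ Pp 0, -(z v) = H (Pp 0) := by
      rw [hHP, ← Finset.sum_neg_distrib]
    have h2 : ∑ v ∈ Finset.univ \ Pp 0, w v = ∑ v ∈ Finset.univ \ Pp 0, w₀ v :=
      Finset.sum_congr rfl (fun v hv => hwnPp v (Finset.mem_sdiff.mp hv).2)
    have h3 : (Finset.univ \ Pp 0) ∪ Pp 0 = Finset.univ :=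
      Finset.sdiff_union_of_subset (Finset.subset_univ _)
    have h4 : ∑ v ∈ Finset.univ \ Pp 0, w₀ v = H Finset.univ - H (Pp 0) := by
      rw [hw₀sum, h3]
    rw [← hsplit, huP, h1, h1', h2, h4]
    ring
  have hwB : w ∈ B := by exact ⟨hwfeas, hwsum⟩
  -- the sup in h z is attained at w
  have habel : ∀ w' : V → ℝ, (∀ S ∈ D, ∑ v ∈ S, w' v ≤ H S) →
      ∑ v, z v * w' v ≤ ∑ v, z v * w v := by
    intro w' hw'
    have hg : ∑ v, z v * (w' v - w v) ≤ 0 := by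
      apply abel_aux (((Finset.univ.image z).filter (fun x => 0 < x)).card) z
        (fun v => w' v - w v) le_rfl hz0
      intro β hβ
      show ∑ v ∈ Finset.univ.filter (fun v => β ≤ z v), (w' v - w v) ≤ 0
      have hLf : Finset.univ.filter (fun v => β ≤ z v) = L β := rfl
      rw [hLf, Finset.sum_sub_distrib]
      have hfe := hw' (L β) (hLD β hβ)
      have hti := hwL β hβ
      linarith
    have hexp : ∑ v, z v * (w' v - w v) = ∑ v, z v * w' v - ∑ v, z v * w v := by
      rw [← Finset.sum_sub_distrib]
      apply Finset.sum_congr rfl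
      intros
      ring
    linarith [hexp ▸ hg]
  -- conclusion
  refine ⟨hz0, ?_⟩
  intro x hx
  show (⨆ w' ∈ B, ((∑ v, z v * w' v : ℝ) : EReal)) + ((2⁻¹ * ∑ v, (z v) ^ 2 : ℝ) : EReal)
      ≤ (⨆ w' ∈ B, ((∑ v, x v * w' v : ℝ) : EReal)) + ((2⁻¹ * ∑ v, (x v) ^ 2 : ℝ) : EReal)
  have step1 : (⨆ w' ∈ B, ((∑ v, z v * w' v : ℝ) : EReal)) ≤ ((∑ v, z v * w v : ℝ) : EReal) := by
    apply iSup₂_le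
    intro w' hw'
    obtain ⟨hw'1, _⟩ := hw'
    exact EReal.coe_le_coe_iff.mpr (habel w' hw'1)
  have step2 : ((∑ v, x v * w v : ℝ) : EReal) ≤ ⨆ w' ∈ B, ((∑ v, x v * w' v : ℝ) : EReal) :=
    le_iSup₂_of_le w hwB le_rfl
  have hptw : ∀ v, z v * w v + 2⁻¹ * (z v) ^ 2 ≤ x v * w v + 2⁻¹ * (x v) ^ 2 := by
    intro v
    by_cases hv : v ∈ Pp 0
    · rw [hwPp v hv]
      nlinarith [sq_nonneg (x v - z v)]
    · rw [hznP v hv, hwnPp v hv]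
      nlinarith [hw₀0 v, hx v]
  have hsumptw : (∑ v, z v * w v) + 2⁻¹ * ∑ v, (z v) ^ 2
      ≤ (∑ v, x v * w v) + 2⁻¹ * ∑ v, (x v) ^ 2 := by
    have h1 : ∑ v, (z v * w v + 2⁻¹ * (z v) ^ 2) ≤ ∑ v, (x v * w v + 2⁻¹ * (x v) ^ 2) :=
      Finset.sum_le_sum (fun v _ => hptw v)
    rw [Finset.sum_add_distrib, Finset.sum_add_distrib, ← Finset.mul_sum, ← Finset.mul_sum] at h1
    exact h1
  calc (⨆ w' ∈ B, ((∑ v, z v * w' v : ℝ) : EReal)) + ((2⁻¹ * ∑ v, (z v) ^ 2 : ℝ) : EReal)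
      ≤ ((∑ v, z v * w v : ℝ) : EReal) + ((2⁻¹ * ∑ v, (z v) ^ 2 : ℝ) : EReal) :=
        add_le_add_left step1 _
    _ = (((∑ v, z v * w v) + 2⁻¹ * ∑ v, (z v) ^ 2 : ℝ) : EReal) := (EReal.coe_add _ _).symm
    _ ≤ (((∑ v, x v * w v) + 2⁻¹ * ∑ v, (x v) ^ 2 : ℝ) : EReal) :=
        EReal.coe_le_coe_iff.mpr hsumptw
    _ = ((∑ v, x v * w v : ℝ) : EReal) + ((2⁻¹ * ∑ v, (x v) ^ 2 : ℝ) : EReal) :=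
        EReal.coe_add _ _
    _ ≤ (⨆ w' ∈ B, ((∑ v, x v * w' v : ℝ) : EReal)) + ((2⁻¹ * ∑ v, (x v) ^ 2 : ℝ) : EReal) :=
        add_le_add_left step2 _
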